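/- Let W ∈ ℝ^{n×n} and m > 0 satisfy (I − W) ⪰ mI, and let α > 0. Then the matrix I + α(I − W) is invertible, and the Cayley operator C = 2(I + α(I − W))^{-1} − I satisfies ‖C‖₂ < 1, i.e., C is a strict contraction in the Euclidean operator norm. -/

import Mathlib

open Matrix
open scoped Matrix.Norms.L2Operator

private lemma enorm_sq_eq_dot {n : ℕ} (u : Fin n → ℝ) :
    ‖(WithLp.equiv 2 (Fin n → ℝ)).symm u‖ ^ 2 = u ⬝ᵥ u := by
  rw [← real_inner_self_eq_norm_sq]
  simp [PiLp.inner_apply, dotProduct, RCLike.inner_apply, mul_comm]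
  rw [EuclideanSpace.real_norm_sq_eq]; simp [sq]

private lemma dot_self_nonneg' {n : ℕ} (u : Fin n → ℝ) : 0 ≤ u ⬝ᵥ u := by
  rw [← enorm_sq_eq_dot]; positivity

private lemma arith_key (μ K V Y U a b d r : ℝ) (hμ : 0 < μ) (hK : 1 ≤ K)
    (hV : 0 ≤ V) (hU : 0 ≤ U) (hb : μ * a ≤ b)
    (hV2 : V ^ 2 = a + 2 * b + d) (hU2 : U ^ 2 = a - 2 * b + d)
    (hVY : V ≤ K * Y) (hY2 : Y ^ 2 = a)
    (hr : r = Real.sqrt (max 0 (1 - 4 * μ / K ^ 2))) : U ≤ r * V := by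
  have hK0 : 0 < K := lt_of_lt_of_le one_pos hK
  have hY : 0 ≤ Y := by nlinarith [sq_nonneg Y, sq_nonneg (K * Y - V)]
  have ha : 0 ≤ a := by nlinarith
  set δ : ℝ := 4 * μ / K ^ 2 with hδdef
  have hδ0 : 0 < δ := by positivity
  have hδK : δ * K ^ 2 = 4 * μ := by rw [hδdef]; field_simp
  set c : ℝ := max 0 (1 - δ) with hcdef
  have hc0 : 0 ≤ c := le_max_left _ _
  have hc1 : 1 - δ ≤ c := le_max_right _ _
  have hr0 : 0 ≤ r := hr ▸ Real.sqrt_nonneg _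
  have hr2 : r ^ 2 = c := by rw [hr]; exact Real.sq_sqrt hc0
  have hVa : V ^ 2 ≤ K ^ 2 * a := by nlinarith
  have hmain : U ^ 2 ≤ (r * V) ^ 2 := by
    have h1 : δ * V ^ 2 ≤ 4 * μ * a := by nlinarith
    have h2 : U ^ 2 ≤ (1 - δ) * V ^ 2 := by nlinarith
    have h3 : (1 - δ) * V ^ 2 ≤ c * V ^ 2 := by nlinarith [sq_nonneg V]
    calc U ^ 2 ≤ c * V ^ 2 := le_trans h2 h3
      _ = (r * V) ^ 2 := by rw [mul_pow, hr2]
  nlinarith [mul_nonneg hr0 hV]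

/-- **The Cayley operator of a strongly monotone linear operator is a strict contraction.**
If `I - W ⪰ mI` with `m > 0` and `α > 0`, then `I + α(I - W)` is invertible and
`C = 2(I + α(I - W))⁻¹ - I` satisfies `‖C‖₂ < 1` (L2 operator norm). -/
theorem cayley_strict_contraction (n : ℕ)
    (W : Matrix (Fin n) (Fin n) ℝ) (m : ℝ) (hm : 0 < m)
    (hmono : ((1/2 : ℝ) • ((1 - W) + (1 - W)ᵀ) -
        m • (1 : Matrix (Fin n) (Fin n) ℝ)).PosSemidef)
    (α : ℝ) (hα : 0 < α) :
    IsUnit (1 + α • (1 - W) : Matrix (Fin n) (Fin n) ℝ) ∧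
      ‖(2 : ℝ) • (1 + α • (1 - W) : Matrix (Fin n) (Fin n) ℝ)⁻¹ - 1‖ < 1 := by
  set A : Matrix (Fin n) (Fin n) ℝ := α • (1 - W) with hAdef
  set T : Matrix (Fin n) (Fin n) ℝ := 1 + A with hTdef
  have hαm : 0 < α * m := mul_pos hα hm
  -- key coercivity inequality
  have key : ∀ x : Fin n → ℝ, α * m * (x ⬝ᵥ x) ≤ x ⬝ᵥ (A *ᵥ x) := by
    intro x
    have h0 := hmono.dotProduct_mulVec_nonneg x
    have htr : x ⬝ᵥ ((1 - W)ᵀ *ᵥ x) = x ⬝ᵥ ((1 - W) *ᵥ x) := by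
      rw [mulVec_transpose, dotProduct_comm, dotProduct_mulVec]
    simp only [star_trivial, sub_mulVec, add_mulVec, smul_mulVec, one_mulVec,
      dotProduct_sub, dotProduct_add, dotProduct_smul, smul_eq_mul, htr] at h0
    have hAx : x ⬝ᵥ (A *ᵥ x) = α * (x ⬝ᵥ ((1 - W) *ᵥ x)) := by
      rw [hAdef, smul_mulVec, dotProduct_smul, smul_eq_mul]
    rw [hAx]
    simp only [sub_mulVec, one_mulVec, dotProduct_sub] at h0 ⊢
    nlinarith [h0]
  -- positivity of T
  have keyT : ∀ x : Fin n → ℝ, (1 + α * m) * (x ⬝ᵥ x) ≤ x ⬝ᵥ (T *ᵥ x) := by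
    intro x
    have h1 : x ⬝ᵥ (T *ᵥ x) = x ⬝ᵥ x + x ⬝ᵥ (A *ᵥ x) := by
      rw [hTdef, add_mulVec, one_mulVec, dotProduct_add]
    rw [h1]; nlinarith [key x]
  -- invertibility
  have hunit : IsUnit T := by
    rw [← Matrix.mulVec_injective_iff_isUnit]
    intro u v huv
    have hz : T *ᵥ (u - v) = 0 := by rw [mulVec_sub, huv, sub_self]
    have h1 : (u - v) ⬝ᵥ (T *ᵥ (u - v)) = 0 := by rw [hz, dotProduct_zero]
    have h2 := keyT (u - v)
    have h3 := dot_self_nonneg' (u - v)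
    have h4 : (u - v) ⬝ᵥ (u - v) = 0 := by nlinarith
    exact sub_eq_zero.mp ((dotProduct_self_eq_zero (v := u - v)).mp h4)
  refine ⟨hunit, ?_⟩
  set C : Matrix (Fin n) (Fin n) ℝ := (2 : ℝ) • T⁻¹ - 1 with hCdef
  have hdet : IsUnit T.det := (Matrix.isUnit_iff_isUnit_det T).mp hunit
  have hTT : T * T⁻¹ = 1 := Matrix.mul_nonsing_inv T hdet
  set K : ℝ := max ‖T‖ 1 with hKdef
  have hK1 : (1 : ℝ) ≤ K := le_max_right _ _
  set r : ℝ := Real.sqrt (max 0 (1 - 4 * (α * m) / K ^ 2)) with hrdef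
  have hr0 : 0 ≤ r := Real.sqrt_nonneg _
  have hr1 : r < 1 := by
    have h1 : max 0 (1 - 4 * (α * m) / K ^ 2) < 1 := by
      have hK0 : (0 : ℝ) < K := lt_of_lt_of_le one_pos hK1
      have : 0 < 4 * (α * m) / K ^ 2 := by positivity
      exact max_lt one_pos (by linarith)
    nlinarith [Real.sq_sqrt (le_max_left (0:ℝ) (1 - 4 * (α * m) / K ^ 2)),
      Real.sqrt_nonneg (max 0 (1 - 4 * (α * m) / K ^ 2)), h1, hr0, hrdef]
  have hbound : ‖C‖ ≤ r := by
    rw [Matrix.l2_opNorm_def]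
    refine ContinuousLinearMap.opNorm_le_bound _ hr0 (fun v => ?_)
    set x : Fin n → ℝ := WithLp.equiv 2 (Fin n → ℝ) v with hxdef
    set y : Fin n → ℝ := T⁻¹ *ᵥ x with hydef
    set w : Fin n → ℝ := A *ᵥ y with hwdef
    have hTy : T *ᵥ y = x := by
      rw [hydef, mulVec_mulVec, hTT, one_mulVec]
    have hxyw : x = y + w := by
      rw [← hTy, hTdef, add_mulVec, one_mulVec, hwdef]
    have hCx : C *ᵥ x = y - w := by
      rw [hCdef, sub_mulVec, smul_mulVec, one_mulVec, ← hydef]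
      rw [hxyw, two_smul]; abel
    have happ : (Matrix.toEuclideanLin.trans LinearMap.toContinuousLinearMap C) v
        = (WithLp.equiv 2 (Fin n → ℝ)).symm (C *ᵥ x) := rfl
    rw [happ, hCx]
    -- dot product identities
    have e1 : x ⬝ᵥ x = y ⬝ᵥ y + 2 * (y ⬝ᵥ w) + w ⬝ᵥ w := by
      rw [hxyw]
      simp only [dotProduct_add, add_dotProduct]
      rw [dotProduct_comm w y]; ring
    have e2 : (y - w) ⬝ᵥ (y - w) = y ⬝ᵥ y - 2 * (y ⬝ᵥ w) + w ⬝ᵥ w := by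
      simp only [dotProduct_sub, sub_dotProduct]
      rw [dotProduct_comm w y]; ring
    have hkey : α * m * (y ⬝ᵥ y) ≤ y ⬝ᵥ w := key y
    have hvx : ‖v‖ ^ 2 = x ⬝ᵥ x := by rw [← enorm_sq_eq_dot x]; congr 1
    have hvy : ‖v‖ ≤ K * ‖(WithLp.equiv 2 (Fin n → ℝ)).symm y‖ := by
      have h5 := Matrix.l2_opNorm_mulVec T ((WithLp.equiv 2 (Fin n → ℝ)).symm y)
      have h6 : ((EuclideanSpace.equiv (Fin n) ℝ).symm <|
          T *ᵥ ((WithLp.equiv 2 (Fin n → ℝ)).symm y)) = v := by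
        show (WithLp.equiv 2 (Fin n → ℝ)).symm (T *ᵥ y) = v
        rw [hTy]; rfl
      rw [h6] at h5
      exact le_trans h5 (mul_le_mul_of_nonneg_right (le_max_left _ _) (norm_nonneg _))
    have hyy : ‖(WithLp.equiv 2 (Fin n → ℝ)).symm y‖ ^ 2 = y ⬝ᵥ y := enorm_sq_eq_dot y
    have hU2 : ‖(WithLp.equiv 2 (Fin n → ℝ)).symm (y - w)‖ ^ 2
        = y ⬝ᵥ y - 2 * (y ⬝ᵥ w) + w ⬝ᵥ w := by rw [enorm_sq_eq_dot, e2]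
    refine arith_key (α * m) K ‖v‖ ‖(WithLp.equiv 2 (Fin n → ℝ)).symm y‖
      ‖(WithLp.equiv 2 (Fin n → ℝ)).symm (y - w)‖ (y ⬝ᵥ y) (y ⬝ᵥ w) (w ⬝ᵥ w) r
      hαm hK1 (norm_nonneg _) (norm_nonneg _) hkey ?_ hU2 hvy hyy hrdef
    rw [hvx, e1]
  exact lt_of_le_of_lt hbound hr1
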